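/- Let σ₀ < 0, μ₀ ≠ 0, w₁ > 0, and define V̂(θ,x) = (1/σ₀)(cos θ − 1) + (w₁/2)(x − (μ₀/σ₀) sin θ)². Then the Hessian of V̂ at (0,0) equals the matrix [[(μ₀²/σ₀²) w₁ − 1/σ₀, −(μ₀/σ₀) w₁], [−(μ₀/σ₀) w₁, w₁]], and this matrix is positive definite. -/

import Mathlib

/-!
Statement 11: the Hessian of the controlled potential
`V̂(θ,x) = (1/σ₀)(cos θ − 1) + (w₁/2)(x − (μ₀/σ₀) sin θ)²` at `(0,0)` is
`[[(μ₀²/σ₀²) w₁ − 1/σ₀, −(μ₀/σ₀) w₁], [−(μ₀/σ₀) w₁, w₁]]`, which is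
positive definite when `σ₀ < 0` and `w₁ > 0`.
-/

noncomputable section

open Real Matrix

/-- The coordinate directions in `ℝ × ℝ` (index `0` is `θ`, index `1` is `x`). -/
def coordDir : Fin 2 → ℝ × ℝ := ![(1, 0), (0, 1)]

lemma aux1 (c k w : ℝ) (p : ℝ × ℝ) :
    HasFDerivAt (fun q : ℝ × ℝ => c * (Real.cos q.1 - 1) + w / 2 * (q.2 - k * Real.sin q.1) ^ 2)
      ((-(c * Real.sin p.1) - w * k * Real.cos p.1 * (p.2 - k * Real.sin p.1)) •
          (ContinuousLinearMap.fst ℝ ℝ ℝ)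
        + (w * (p.2 - k * Real.sin p.1)) • (ContinuousLinearMap.snd ℝ ℝ ℝ)) p := by
  have hA : HasFDerivAt (fun q : ℝ × ℝ => q.1) (ContinuousLinearMap.fst ℝ ℝ ℝ) p :=
    hasFDerivAt_fst
  have hB : HasFDerivAt (fun q : ℝ × ℝ => q.2) (ContinuousLinearMap.snd ℝ ℝ ℝ) p :=
    hasFDerivAt_snd
  have hcos : HasFDerivAt (fun q : ℝ × ℝ => Real.cos q.1)
      ((-Real.sin p.1) • (ContinuousLinearMap.fst ℝ ℝ ℝ)) p :=
    (Real.hasDerivAt_cos p.1).comp_hasFDerivAt p hA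
  have hsin : HasFDerivAt (fun q : ℝ × ℝ => Real.sin q.1)
      ((Real.cos p.1) • (ContinuousLinearMap.fst ℝ ℝ ℝ)) p :=
    (Real.hasDerivAt_sin p.1).comp_hasFDerivAt p hA
  have hu : HasFDerivAt (fun q : ℝ × ℝ => q.2 - k * Real.sin q.1)
      ((ContinuousLinearMap.snd ℝ ℝ ℝ) - (k * Real.cos p.1) • (ContinuousLinearMap.fst ℝ ℝ ℝ)) p := by
    exact (hB.sub (hsin.const_mul k)).congr_fderiv (by simp [smul_smul])
  have hsq : HasFDerivAt (fun q : ℝ × ℝ => (q.2 - k * Real.sin q.1) ^ 2)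
      ((p.2 - k * Real.sin p.1) •
          ((ContinuousLinearMap.snd ℝ ℝ ℝ) - (k * Real.cos p.1) • (ContinuousLinearMap.fst ℝ ℝ ℝ))
        + (p.2 - k * Real.sin p.1) •
          ((ContinuousLinearMap.snd ℝ ℝ ℝ) - (k * Real.cos p.1) • (ContinuousLinearMap.fst ℝ ℝ ℝ))) p := by
    simp only [pow_two]
    exact hu.mul hu
  have := ((hcos.sub_const 1).const_mul c).add (hsq.const_mul (w / 2))
  refine this.congr_fderiv ?_
  ext v
  all_goals simp
  all_goals ring

lemma aux2 (c k w : ℝ) :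
    HasFDerivAt (fun q : ℝ × ℝ => -(c * Real.sin q.1) - w * k * Real.cos q.1 * (q.2 - k * Real.sin q.1))
      ((w * k ^ 2 - c) • (ContinuousLinearMap.fst ℝ ℝ ℝ)
        + (-(w * k)) • (ContinuousLinearMap.snd ℝ ℝ ℝ)) ((0, 0) : ℝ × ℝ) := by
  set p : ℝ × ℝ := (0, 0)
  have hA : HasFDerivAt (fun q : ℝ × ℝ => q.1) (ContinuousLinearMap.fst ℝ ℝ ℝ) p :=
    hasFDerivAt_fst
  have hB : HasFDerivAt (fun q : ℝ × ℝ => q.2) (ContinuousLinearMap.snd ℝ ℝ ℝ) p :=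
    hasFDerivAt_snd
  have hcos : HasFDerivAt (fun q : ℝ × ℝ => Real.cos q.1)
      ((-Real.sin p.1) • (ContinuousLinearMap.fst ℝ ℝ ℝ)) p :=
    (Real.hasDerivAt_cos p.1).comp_hasFDerivAt p hA
  have hsin : HasFDerivAt (fun q : ℝ × ℝ => Real.sin q.1)
      ((Real.cos p.1) • (ContinuousLinearMap.fst ℝ ℝ ℝ)) p :=
    (Real.hasDerivAt_sin p.1).comp_hasFDerivAt p hA
  have hu : HasFDerivAt (fun q : ℝ × ℝ => q.2 - k * Real.sin q.1)
      ((ContinuousLinearMap.snd ℝ ℝ ℝ) - (k * Real.cos p.1) • (ContinuousLinearMap.fst ℝ ℝ ℝ)) p := by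
    exact (hB.sub (hsin.const_mul k)).congr_fderiv (by simp [smul_smul])
  have hmul := ((hcos.const_mul (w * k)).mul hu)
  have := ((hsin.const_mul c).neg).sub hmul
  have h2 : (fun q : ℝ × ℝ => -(c * Real.sin q.1) - w * k * Real.cos q.1 * (q.2 - k * Real.sin q.1))
      = fun q : ℝ × ℝ => -(c * Real.sin q.1) - (w * k * Real.cos q.1) * (q.2 - k * Real.sin q.1) := rfl
  rw [h2]
  refine this.congr_fderiv ?_
  ext v
  all_goals simp [p]
  all_goals ring

lemma aux3 (c k w : ℝ) :
    HasFDerivAt (fun q : ℝ × ℝ => w * (q.2 - k * Real.sin q.1))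
      ((-(w * k)) • (ContinuousLinearMap.fst ℝ ℝ ℝ)
        + w • (ContinuousLinearMap.snd ℝ ℝ ℝ)) ((0, 0) : ℝ × ℝ) := by
  set p : ℝ × ℝ := (0, 0)
  have hA : HasFDerivAt (fun q : ℝ × ℝ => q.1) (ContinuousLinearMap.fst ℝ ℝ ℝ) p :=
    hasFDerivAt_fst
  have hB : HasFDerivAt (fun q : ℝ × ℝ => q.2) (ContinuousLinearMap.snd ℝ ℝ ℝ) p :=
    hasFDerivAt_snd
  have hsin : HasFDerivAt (fun q : ℝ × ℝ => Real.sin q.1)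
      ((Real.cos p.1) • (ContinuousLinearMap.fst ℝ ℝ ℝ)) p :=
    (Real.hasDerivAt_sin p.1).comp_hasFDerivAt p hA
  have hu : HasFDerivAt (fun q : ℝ × ℝ => q.2 - k * Real.sin q.1)
      ((ContinuousLinearMap.snd ℝ ℝ ℝ) - (k * Real.cos p.1) • (ContinuousLinearMap.fst ℝ ℝ ℝ)) p := by
    exact (hB.sub (hsin.const_mul k)).congr_fderiv (by simp [smul_smul])
  have := hu.const_mul w
  refine this.congr_fderiv ?_
  ext v
  all_goals simp [p]
  all_goals ring

theorem statement11 (σ₀ μ₀ w₁ : ℝ) (hσ₀ : σ₀ < 0) (hμ₀ : μ₀ ≠ 0) (hw₁ : 0 < w₁)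
    (V : ℝ × ℝ → ℝ)
    (hV : ∀ p : ℝ × ℝ, V p =
      (1 / σ₀) * (Real.cos p.1 - 1)
        + (w₁ / 2) * (p.2 - (μ₀ / σ₀) * Real.sin p.1) ^ 2) :
    (∀ i j : Fin 2,
      fderiv ℝ (fun p => fderiv ℝ V p (coordDir j)) (0, 0) (coordDir i) =
        !![μ₀ ^ 2 / σ₀ ^ 2 * w₁ - 1 / σ₀, -(μ₀ / σ₀) * w₁;
           -(μ₀ / σ₀) * w₁, w₁] i j) ∧
    (!![μ₀ ^ 2 / σ₀ ^ 2 * w₁ - 1 / σ₀, -(μ₀ / σ₀) * w₁;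
        -(μ₀ / σ₀) * w₁, w₁]).PosDef := by
  obtain rfl : V = fun q : ℝ × ℝ => (1 / σ₀) * (Real.cos q.1 - 1)
      + (w₁ / 2) * (q.2 - (μ₀ / σ₀) * Real.sin q.1) ^ 2 := funext hV
  set c : ℝ := 1 / σ₀ with hc
  set k : ℝ := μ₀ / σ₀ with hk
  have hkey : ∀ j : Fin 2, ∀ q : ℝ × ℝ,
      fderiv ℝ (fun q : ℝ × ℝ => c * (Real.cos q.1 - 1) + w₁ / 2 * (q.2 - k * Real.sin q.1) ^ 2) q (coordDir j)
        = if j = 0 then -(c * Real.sin q.1) - w₁ * k * Real.cos q.1 * (q.2 - k * Real.sin q.1)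
          else w₁ * (q.2 - k * Real.sin q.1) := by
    intro j q
    rw [(aux1 c k w₁ q).fderiv]
    fin_cases j <;> simp [coordDir]
  have hσ : σ₀ ≠ 0 := ne_of_lt hσ₀
  have h0 : (fun q : ℝ × ℝ => fderiv ℝ
      (fun q : ℝ × ℝ => c * (Real.cos q.1 - 1) + w₁ / 2 * (q.2 - k * Real.sin q.1) ^ 2) q (coordDir 0))
      = fun q : ℝ × ℝ => -(c * Real.sin q.1) - w₁ * k * Real.cos q.1 * (q.2 - k * Real.sin q.1) := by
    funext q; simpa using hkey 0 q
  have h1 : (fun q : ℝ × ℝ => fderiv ℝ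
      (fun q : ℝ × ℝ => c * (Real.cos q.1 - 1) + w₁ / 2 * (q.2 - k * Real.sin q.1) ^ 2) q (coordDir 1))
      = fun q : ℝ × ℝ => w₁ * (q.2 - k * Real.sin q.1) := by
    funext q; simpa using hkey 1 q
  constructor
  · simp only [Fin.forall_fin_two]
    refine ⟨⟨?_, ?_⟩, ?_, ?_⟩
    · rw [h0, (aux2 c k w₁).fderiv]
      simp [coordDir, hk, div_pow]
      ring
    · rw [h1, (aux3 c k w₁).fderiv]
      simp [coordDir]
      ring
    · rw [h0, (aux2 c k w₁).fderiv]
      simp [coordDir]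
      ring
    · rw [h1, (aux3 c k w₁).fderiv]
      simp [coordDir]
  · refine Matrix.posDef_iff_dotProduct_mulVec.mpr ⟨?_, ?_⟩
    · ext i j
      fin_cases i <;> fin_cases j <;> simp [Matrix.conjTranspose_apply]
    · intro x hx
      have hx0 : x 0 ≠ 0 ∨ x 1 ≠ 0 := by
        by_contra h
        push_neg at h
        apply hx
        funext i
        fin_cases i <;> simp [h.1, h.2]
      have hcneg : 0 < -c := by
        have h' : (0:ℝ) < 1 / -σ₀ := div_pos one_pos (neg_pos.mpr hσ₀)
        rw [hc]
        simpa [div_neg] using h'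
      have hquad : (star x) ⬝ᵥ ((!![μ₀ ^ 2 / σ₀ ^ 2 * w₁ - 1 / σ₀, -(μ₀ / σ₀) * w₁;
          -(μ₀ / σ₀) * w₁, w₁]) *ᵥ x)
          = w₁ * (x 1 - k * x 0) ^ 2 + (-c) * (x 0) ^ 2 := by
        simp [dotProduct, Matrix.mulVec, Fin.sum_univ_two, hk, hc]
        field_simp
        ring
      rw [hquad]
      rcases hx0 with h | h
      · have hs : 0 < (x 0) ^ 2 := lt_of_le_of_ne (sq_nonneg _) (Ne.symm (pow_ne_zero 2 h))
        nlinarith [sq_nonneg (x 1 - k * x 0), mul_pos hcneg hs]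
      · rcases eq_or_ne (x 0) 0 with h0 | h0
        · have hne : x 1 - k * x 0 ≠ 0 := by simp [h0, h]
          have hs : 0 < (x 1 - k * x 0) ^ 2 :=
            lt_of_le_of_ne (sq_nonneg _) (Ne.symm (pow_ne_zero 2 hne))
          nlinarith [sq_nonneg (x 0), mul_pos hw₁ hs]
        · have hs : 0 < (x 0) ^ 2 := lt_of_le_of_ne (sq_nonneg _) (Ne.symm (pow_ne_zero 2 h0))
          nlinarith [sq_nonneg (x 1 - k * x 0), mul_pos hcneg hs]
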